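/- Let A and B be square ℕ-matrices with no zero rows. If the one-sided edge shifts (X_A, σ_A) and (X_B, σ_B) are one-sided conjugate, i.e., there is a homeomorphism h : X_A → X_B with h ∘ σ_A = σ_B ∘ h, then A and B are unitally shift equivalent. -/

import Mathlib

open Matrix

/-- `(R,S)` is a shift equivalence of lag `l` from the `n × n` ℕ-matrix `A` to the
`m × m` ℕ-matrix `B`. -/
def IsShiftEquivalence {n m : ℕ} (A : Matrix (Fin n) (Fin n) ℕ) (B : Matrix (Fin m) (Fin m) ℕ)
    (R : Matrix (Fin n) (Fin m) ℕ) (S : Matrix (Fin m) (Fin n) ℕ) (l : ℕ) : Prop :=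
  1 ≤ l ∧ A ^ l = R * S ∧ B ^ l = S * R ∧ A * R = R * B ∧ B * S = S * A

/-- `(R,S)` is a unital shift equivalence of lag `l` from `A` to `B`:
a shift equivalence such that `(Bᵀ)^p Rᵀ 𝟙 = (Bᵀ)^(p+q) 𝟙` for some `p q : ℕ`. -/
def IsUnitalShiftEquivalence {n m : ℕ} (A : Matrix (Fin n) (Fin n) ℕ)
    (B : Matrix (Fin m) (Fin m) ℕ)
    (R : Matrix (Fin n) (Fin m) ℕ) (S : Matrix (Fin m) (Fin n) ℕ) (l : ℕ) : Prop :=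
  IsShiftEquivalence A B R S l ∧
    ∃ p q : ℕ, (Bᵀ ^ p) *ᵥ (Rᵀ *ᵥ fun _ => 1) = (Bᵀ ^ (p + q)) *ᵥ (fun _ => 1)

/-- `A` and `B` are unitally shift equivalent. -/
def UnitallyShiftEquivalent {n m : ℕ} (A : Matrix (Fin n) (Fin n) ℕ)
    (B : Matrix (Fin m) (Fin m) ℕ) : Prop :=
  ∃ (l : ℕ) (R : Matrix (Fin n) (Fin m) ℕ) (S : Matrix (Fin m) (Fin n) ℕ),
    IsUnitalShiftEquivalence A B R S l

/-- `A` and `B` are shift equivalent. -/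
def ShiftEquivalent {n m : ℕ} (A : Matrix (Fin n) (Fin n) ℕ)
    (B : Matrix (Fin m) (Fin m) ℕ) : Prop :=
  ∃ (l : ℕ) (R : Matrix (Fin n) (Fin m) ℕ) (S : Matrix (Fin m) (Fin n) ℕ),
    IsShiftEquivalence A B R S l

/-- The edge set of the graph of `A`: `A i j` edges from vertex `i` to vertex `j`.
The source of an edge `⟨i, j, e⟩` is `i` and its range is `j`. -/
def EdgeType {n : ℕ} (A : Matrix (Fin n) (Fin n) ℕ) : Type :=
  (i : Fin n) × (j : Fin n) × Fin (A i j)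

/-- The edge set carries the discrete topology. -/
instance {n : ℕ} (A : Matrix (Fin n) (Fin n) ℕ) : TopologicalSpace (EdgeType A) := ⊥

/-- The one-sided edge shift space `X_A`, a subspace of the product space `(E¹)^ℕ`. -/
def ShiftSpace {n : ℕ} (A : Matrix (Fin n) (Fin n) ℕ) : Type :=
  { x : ℕ → EdgeType A // ∀ i : ℕ, (x i).2.1 = (x (i + 1)).1 }

instance {n : ℕ} (A : Matrix (Fin n) (Fin n) ℕ) : TopologicalSpace (ShiftSpace A) :=
  instTopologicalSpaceSubtype

/-- The shift map `σ_A : X_A → X_A`. -/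
def shiftMap {n : ℕ} (A : Matrix (Fin n) (Fin n) ℕ) : ShiftSpace A → ShiftSpace A :=
  fun x => ⟨fun i => x.1 (i + 1), fun i => x.2 (i + 1)⟩

/-- `A` has no zero rows. -/
def NoZeroRows {n : ℕ} (A : Matrix (Fin n) (Fin n) ℕ) : Prop :=
  ∀ i, ∃ j, A i j ≠ 0

/-- A point `x` is eventually periodic for `σ` if `σ^p x = σ^q x` for some distinct `p, q`. -/
def EventuallyPeriodic {X : Type*} (σ : X → X) (x : X) : Prop :=
  ∃ p q : ℕ, p ≠ q ∧ σ^[p] x = σ^[q] x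

namespace USE

variable {k : ℕ} {M : Matrix (Fin k) (Fin k) ℕ}

def src (e : EdgeType M) : Fin k := e.1
def rng (e : EdgeType M) : Fin k := e.2.1

instance : Finite (EdgeType M) := by
  unfold EdgeType
  haveI : ∀ i : Fin k, Finite ((j : Fin k) × Fin (M i j)) := fun i => Finite.instSigma
  exact Finite.instSigma
instance : DiscreteTopology (EdgeType M) := ⟨rfl⟩

/-- Paths of length `t` in the graph of `M` (sequences of `t` consecutive edges). -/
def PathT (M : Matrix (Fin k) (Fin k) ℕ) (t : ℕ) : Type :=
  { w : Fin t → EdgeType M // ∀ (s : ℕ) (h : s + 1 < t), rng (w ⟨s, by omega⟩) = src (w ⟨s+1, h⟩) }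

instance (t : ℕ) : Finite (PathT M t) := by unfold PathT; exact Subtype.finite

def startV {t : ℕ} (w : PathT M (t+1)) : Fin k := src (w.1 ⟨0, by omega⟩)
def endV {t : ℕ} (w : PathT M (t+1)) : Fin k := rng (w.1 ⟨t, by omega⟩)

lemma PathT.ext {t : ℕ} {w w' : PathT M t} (h : ∀ s : Fin t, w.1 s = w'.1 s) : w = w' :=
  Subtype.ext (funext h)

/-- Points of the shift space agree on the first `t` coordinates. -/
def agree (x y : ShiftSpace M) (t : ℕ) : Prop := ∀ s, s < t → x.1 s = y.1 s

lemma agree.mono {x y : ShiftSpace M} {t t' : ℕ} (h : agree x y t) (ht : t' ≤ t) :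
    agree x y t' := fun s hs => h s (lt_of_lt_of_le hs ht)

lemma point_ext {x y : ShiftSpace M} (h : ∀ s, x.1 s = y.1 s) : x = y :=
  Subtype.ext (funext h)

lemma shift_coord (x : ShiftSpace M) (s : ℕ) : (shiftMap M x).1 s = x.1 (s+1) := rfl

lemma shift_iter_coord (r : ℕ) (x : ShiftSpace M) (s : ℕ) :
    ((shiftMap M)^[r] x).1 s = x.1 (r + s) := by
  induction r generalizing x s with
  | zero => simp
  | succ r ih =>
      rw [Function.iterate_succ_apply, ih (shiftMap M x) s, shift_coord]
      have e : r + 1 + s = r + s + 1 := by omega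
      rw [e]

/-- Prepend an edge to a point. -/
def cons (ed : EdgeType M) (x : ShiftSpace M) (hc : rng ed = src (x.1 0)) : ShiftSpace M :=
  ⟨fun s => match s with
    | 0 => ed
    | (s+1) => x.1 s,
   by intro i
      match i with
      | 0 => exact hc
      | (i+1) => exact x.2 i⟩

@[simp] lemma cons_zero (ed : EdgeType M) (x : ShiftSpace M) (hc) : (cons ed x hc).1 0 = ed := rfl
@[simp] lemma cons_succ (ed : EdgeType M) (x : ShiftSpace M) (hc) (s : ℕ) :
    (cons ed x hc).1 (s+1) = x.1 s := rfl
@[simp] lemma shift_cons (ed : EdgeType M) (x : ShiftSpace M) (hc) :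
    shiftMap M (cons ed x hc) = x := point_ext (fun s => rfl)

lemma eq_cons {p : ShiftSpace M} {ed : EdgeType M} {z : ShiftSpace M} {hc}
    (h0 : p.1 0 = ed) (hs : shiftMap M p = z) : p = cons ed z hc := by
  apply point_ext
  intro s
  match s with
  | 0 => exact h0
  | (s+1) => rw [cons_succ, ← hs]; rfl

/-- Glue a path of length `t` onto a point. -/
def glue {t : ℕ} (w : PathT M t) (x : ShiftSpace M)
    (hc : ∀ h : 0 < t, rng (w.1 ⟨t-1, by omega⟩) = src (x.1 0)) : ShiftSpace M :=
  ⟨fun s => if h : s < t then w.1 ⟨s, h⟩ else x.1 (s - t),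
   by intro i
      dsimp only
      by_cases h1 : i + 1 < t
      · have h0 : i < t := by omega
        rw [dif_pos h0, dif_pos h1]
        exact w.2 i h1
      · by_cases h0 : i < t
        · have ht : 0 < t := by omega
          rw [dif_pos h0, dif_neg h1]
          have h2 : i + 1 - t = 0 := by omega
          rw [h2]
          have h3 : (⟨i, h0⟩ : Fin t) = ⟨t - 1, by omega⟩ := by
            apply Fin.ext; simp; omega
          rw [h3]
          exact hc ht
        · rw [dif_neg h0, dif_neg h1]
          have h2 : i + 1 - t = (i - t) + 1 := by omega
          rw [h2]
          exact x.2 (i - t)⟩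

lemma glue_lt {t : ℕ} (w : PathT M t) (x : ShiftSpace M) (hc) {s : ℕ} (h : s < t) :
    (glue w x hc).1 s = w.1 ⟨s, h⟩ := dif_pos h

lemma glue_ge {t : ℕ} (w : PathT M t) (x : ShiftSpace M) (hc) (s : ℕ) :
    (glue w x hc).1 (t + s) = x.1 s := by
  have h : ¬ (t + s < t) := by omega
  show (if h : t + s < t then _ else x.1 (t + s - t)) = x.1 s
  rw [dif_neg h]
  have e : t + s - t = s := by omega
  rw [e]

lemma shift_iter_glue {t : ℕ} (w : PathT M t) (x : ShiftSpace M) (hc) :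
    (shiftMap M)^[t] (glue w x hc) = x := by
  apply point_ext
  intro s
  rw [shift_iter_coord, glue_ge]

/-- The initial segment of a point, as a path. -/
def takeP (x : ShiftSpace M) (t : ℕ) : PathT M t :=
  ⟨fun s => x.1 s, fun s _ => x.2 s⟩

@[simp] lemma takeP_coord (x : ShiftSpace M) (t : ℕ) (s : Fin t) :
    (takeP x t).1 s = x.1 s := rfl

lemma glue_takeP (x : ShiftSpace M) (t : ℕ) (hc) :
    glue (takeP x t) ((shiftMap M)^[t] x) hc = x := by
  apply point_ext
  intro s
  by_cases h : s < t
  · rw [glue_lt _ _ _ h]; rfl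
  · have : s = t + (s - t) := by omega
    rw [this, glue_ge, shift_iter_coord]

/-- A choice of an edge out of each vertex. -/
noncomputable def nxtE (hM : NoZeroRows M) (i : Fin k) : EdgeType M :=
  ⟨i, (hM i).choose, ⟨0, Nat.pos_of_ne_zero (hM i).choose_spec⟩⟩

@[simp] lemma nxtE_src (hM : NoZeroRows M) (i : Fin k) : src (nxtE hM i) = i := rfl

/-- An infinite path starting at a given vertex. -/
noncomputable def ray (hM : NoZeroRows M) (i : Fin k) : ShiftSpace M :=
  ⟨fun s => Nat.rec (nxtE hM i) (fun _ e => nxtE hM (rng e)) s, fun _ => rfl⟩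

@[simp] lemma ray_src (hM : NoZeroRows M) (i : Fin k) : src ((ray hM i).1 0) = i := rfl

/-- Extend a (nonempty) path to a point of the shift space. -/
noncomputable def extendP (hM : NoZeroRows M) {t : ℕ} (w : PathT M (t+1)) : ShiftSpace M :=
  glue w (ray hM (endV w)) (fun _ => by simp [endV])

lemma extendP_coord (hM : NoZeroRows M) {t : ℕ} (w : PathT M (t+1)) {s : ℕ} (h : s < t+1) :
    (extendP hM w).1 s = w.1 ⟨s, h⟩ := glue_lt _ _ _ h


variable {k : ℕ} {M : Matrix (Fin k) (Fin k) ℕ}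

/-! ### Path surgery -/

def dropFirst {t : ℕ} (w : PathT M (t+1)) : PathT M t :=
  ⟨fun s => w.1 ⟨s.1 + 1, by omega⟩, by
    intro s h
    exact w.2 (s+1) (by omega)⟩

lemma dropFirst_coord {t : ℕ} (w : PathT M (t+1)) (s : Fin t) :
    (dropFirst w).1 s = w.1 ⟨s.1 + 1, by omega⟩ := rfl

def dropLast {t : ℕ} (w : PathT M (t+1)) : PathT M t :=
  ⟨fun s => w.1 ⟨s.1, by omega⟩, by
    intro s h
    exact w.2 s (by omega)⟩

lemma dropLast_coord {t : ℕ} (w : PathT M (t+1)) (s : Fin t) :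
    (dropLast w).1 s = w.1 ⟨s.1, by omega⟩ := rfl

def dropN (a : ℕ) {t : ℕ} (w : PathT M (a+t)) : PathT M t :=
  ⟨fun s => w.1 ⟨a + s.1, by omega⟩, by
    intro s h
    exact w.2 (a+s) (by omega)⟩

def consPath (ed : EdgeType M) {t : ℕ} (w : PathT M t)
    (hc : ∀ h : 0 < t, rng ed = src (w.1 ⟨0, h⟩)) : PathT M (t+1) :=
  ⟨fun s => match s with
    | ⟨0, _⟩ => ed
    | ⟨v+1, h⟩ => w.1 ⟨v, by omega⟩, by
    intro s h
    match s with
    | 0 => exact hc (by omega)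
    | (s+1) => exact w.2 s (by omega)⟩

lemma consPath_zero (ed : EdgeType M) {t : ℕ} (w : PathT M t) (hc) (h0 : (0:ℕ) < t+1) :
    (consPath ed w hc).1 ⟨0, h0⟩ = ed := rfl

lemma consPath_succ (ed : EdgeType M) {t : ℕ} (w : PathT M t) (hc) (s : ℕ) (h : s + 1 < t + 1) :
    (consPath ed w hc).1 ⟨s+1, h⟩ = w.1 ⟨s, by omega⟩ := rfl

def snocPath {t : ℕ} (w : PathT M (t+1)) (ed : EdgeType M)
    (hc : rng (w.1 ⟨t, by omega⟩) = src ed) : PathT M (t+2) :=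
  ⟨fun s => if h : s.1 < t+1 then w.1 ⟨s.1, h⟩ else ed, by
    intro s h
    dsimp only
    by_cases h1 : s + 1 < t + 1
    · rw [dif_pos (by omega : s < t+1), dif_pos h1]
      exact w.2 s (by omega)
    · have h0 : s < t + 1 := by omega
      rw [dif_pos h0, dif_neg h1]
      have h3 : (⟨s, h0⟩ : Fin (t+1)) = ⟨t, by omega⟩ := by
        apply Fin.ext; simp; omega
      rw [h3]
      exact hc⟩

lemma snocPath_lt {t : ℕ} (w : PathT M (t+1)) (ed : EdgeType M) (hc) {s : ℕ}
    (h : s < t + 1) (h' : s < t + 2) :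
    (snocPath w ed hc).1 ⟨s, h'⟩ = w.1 ⟨s, h⟩ := by
  have e : (snocPath w ed hc).1 ⟨s, h'⟩
      = if hh : s < t+1 then w.1 ⟨s, hh⟩ else ed := rfl
  rw [e, dif_pos h]

lemma snocPath_last {t : ℕ} (w : PathT M (t+1)) (ed : EdgeType M) (hc) (h' : t+1 < t+2) :
    (snocPath w ed hc).1 ⟨t+1, h'⟩ = ed := by
  have e : (snocPath w ed hc).1 ⟨t+1, h'⟩
      = if hh : t+1 < t+1 then w.1 ⟨t+1, hh⟩ else ed := rfl
  rw [e, dif_neg (by omega)]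

/-! ### Counting -/

lemma card_subtype_iff {α : Type*} {P Q : α → Prop} (h : ∀ x, P x ↔ Q x) :
    Nat.card {x // P x} = Nat.card {x // Q x} :=
  Nat.card_congr (Equiv.subtypeEquivRight h)

lemma ncard_sigma {ι : Type*} [Fintype ι] (f : ι → Type*) [∀ i, Finite (f i)] :
    Nat.card (Σ i, f i) = ∑ i, Nat.card (f i) := by
  letI := fun i => Fintype.ofFinite (f i)
  simp [Nat.card_eq_fintype_card]

lemma card_edge (i j : Fin k) :
    Nat.card {ed : EdgeType M // src ed = i ∧ rng ed = j} = M i j := by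
  have e : {ed : EdgeType M // src ed = i ∧ rng ed = j} ≃ Fin (M i j) := by
    refine Equiv.symm (Equiv.ofBijective (fun c => ⟨⟨i, j, c⟩, rfl, rfl⟩) ⟨?_, ?_⟩)
    · intro a b hab
      have := congrArg (fun q => q.1) hab
      simpa [EdgeType] using this
    · rintro ⟨⟨i', j', c⟩, h1, h2⟩
      have hi : i' = i := h1
      have hj : j' = j := h2
      subst hi; subst hj
      exact ⟨c, rfl⟩
  rw [Nat.card_congr e]
  simp

lemma card_pairs {k' : ℕ} {γ δ : Type*} [Finite γ] [Finite δ]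
    (F : γ → Fin k') (G : δ → Fin k') (P : γ → Prop) (Q : δ → Prop) :
    Nat.card {p : γ × δ // P p.1 ∧ G p.2 = F p.1 ∧ Q p.2}
      = ∑ c : Fin k', Nat.card {x : γ // P x ∧ F x = c} * Nat.card {y : δ // Q y ∧ G y = c} := by
  have e : {p : γ × δ // P p.1 ∧ G p.2 = F p.1 ∧ Q p.2}
      ≃ Σ c : Fin k', {x : γ // P x ∧ F x = c} × {y : δ // Q y ∧ G y = c} :=
    { toFun := fun p => ⟨F p.1.1, ⟨⟨p.1.1, p.2.1, rfl⟩, ⟨p.1.2, p.2.2.2, p.2.2.1⟩⟩⟩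
      invFun := fun q => ⟨(q.2.1.1, q.2.2.1), q.2.1.2.1, by rw [q.2.2.2.2, q.2.1.2.2], q.2.2.2.1⟩
      left_inv := fun p => rfl
      right_inv := fun q => by
        obtain ⟨c, ⟨x, hx1, hx2⟩, ⟨y, hy1, hy2⟩⟩ := q
        subst hx2
        rfl }
  rw [Nat.card_congr e, ncard_sigma]
  congr 1
  funext c
  rw [Nat.card_prod]

/-- Splitting off the first edge of a path. -/
def consSplit {t : ℕ} (i j : Fin k) :
    {w : PathT M (t+2) // startV w = i ∧ endV w = j}
      ≃ {p : EdgeType M × PathT M (t+1) // src p.1 = i ∧ startV p.2 = rng p.1 ∧ endV p.2 = j} where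
  toFun w := ⟨(w.1.1 ⟨0, by omega⟩, dropFirst w.1),
    w.2.1,
    (w.1.2 0 (by omega)).symm,
    w.2.2⟩
  invFun p := ⟨consPath p.1.1 p.1.2 (fun h => p.2.2.1.symm),
    p.2.1, p.2.2.2⟩
  left_inv w := by
    apply Subtype.ext
    apply PathT.ext
    rintro ⟨s, hs⟩
    match s with
    | 0 => rfl
    | (s+1) => rfl
  right_inv p := by
    apply Subtype.ext
    obtain ⟨⟨ed, w⟩, h1, h2, h3⟩ := p
    refine Prod.ext ?_ ?_
    · rfl
    · apply PathT.ext
      rintro ⟨s, hs⟩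
      rfl

/-- Splitting off the last edge of a path, keeping a predicate on the initial part. -/
def snocSplit {t : ℕ} (Pr : PathT M (t+1) → Prop) (j : Fin k) :
    {w : PathT M (t+2) // Pr (dropLast w) ∧ endV w = j}
      ≃ {p : PathT M (t+1) × EdgeType M // Pr p.1 ∧ src p.2 = endV p.1 ∧ rng p.2 = j} where
  toFun w := ⟨(dropLast w.1, w.1.1 ⟨t+1, by omega⟩),
    w.2.1,
    (w.1.2 t (by omega)).symm,
    w.2.2⟩
  invFun p := ⟨snocPath p.1.1 p.1.2 p.2.2.1.symm,
    by
      have : dropLast (snocPath p.1.1 p.1.2 p.2.2.1.symm) = p.1.1 := by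
        apply PathT.ext
        rintro ⟨s, hs⟩
        rw [dropLast_coord]
        exact snocPath_lt _ _ _ hs _
      rw [this]
      exact p.2.1,
    by
      have : endV (snocPath p.1.1 p.1.2 p.2.2.1.symm) = rng p.1.2 := by
        unfold endV
        rw [snocPath_last]
      rw [this]
      exact p.2.2.2⟩
  left_inv w := by
    apply Subtype.ext
    apply PathT.ext
    rintro ⟨s, hs⟩
    by_cases h : s < t + 1
    · refine (snocPath_lt _ _ (w.1.2 t (by omega)) h hs).trans ?_
      rfl
    · have hs' : s = t + 1 := by omega
      subst hs'
      exact snocPath_last _ _ (w.1.2 t (by omega)) hs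
  right_inv p := by
    obtain ⟨⟨w, ed⟩, h1, h2, h3⟩ := p
    apply Subtype.ext
    refine Prod.ext ?_ ?_
    · apply PathT.ext
      rintro ⟨s, hs⟩
      rw [dropLast_coord]
      exact snocPath_lt w ed h2.symm hs (by omega)
    · exact snocPath_last w ed h2.symm (by omega)

/-- Matrix powers count paths. -/
lemma pow_card : ∀ (t : ℕ) (i j : Fin k),
    (M ^ (t+1)) i j = Nat.card {w : PathT M (t+1) // startV w = i ∧ endV w = j} := by
  intro t
  induction t with
  | zero =>
      intro i j
      rw [pow_one]
      have e : {w : PathT M 1 // startV w = i ∧ endV w = j}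
          ≃ {ed : EdgeType M // src ed = i ∧ rng ed = j} :=
        { toFun := fun w => ⟨w.1.1 ⟨0, by omega⟩, w.2.1, w.2.2⟩
          invFun := fun ed => ⟨⟨fun _ => ed.1, by intro s h; omega⟩, ed.2.1, ed.2.2⟩
          left_inv := fun w => by
            apply Subtype.ext
            apply PathT.ext
            rintro ⟨s, hs⟩
            have hs0 : s = 0 := by omega
            subst hs0
            rfl
          right_inv := fun ed => rfl }
      rw [Nat.card_congr e, card_edge]
  | succ t ih =>
      intro i j
      rw [pow_succ', mul_apply]
      have step1 : ∀ c : Fin k, M i c * (M ^ (t+1)) c j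
          = Nat.card {ed : EdgeType M // src ed = i ∧ rng ed = c}
            * Nat.card {w : PathT M (t+1) // endV w = j ∧ startV w = c} := by
        intro c
        rw [card_edge, ih c, card_subtype_iff (fun w => and_comm)]
      rw [Finset.sum_congr rfl (fun c _ => step1 c)]
      rw [← card_pairs rng startV (fun ed => src ed = i) (fun w => endV w = j)]
      exact (Nat.card_congr (consSplit i j)).symm


variable {k : ℕ} {M : Matrix (Fin k) (Fin k) ℕ}

lemma closed_shiftSpace :
    IsClosed {x : ℕ → EdgeType M | ∀ i : ℕ, (x i).2.1 = (x (i+1)).1} := by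
  have he : {x : ℕ → EdgeType M | ∀ i : ℕ, (x i).2.1 = (x (i+1)).1}
      = ⋂ i : ℕ, {x | (x i).2.1 = (x (i+1)).1} := by
    ext x; simp [Set.mem_iInter]
  rw [he]
  refine isClosed_iInter (fun i => ?_)
  have hcont : Continuous (fun x : ℕ → EdgeType M => (x i, x (i+1))) :=
    (continuous_apply i).prodMk (continuous_apply (i+1))
  have he2 : {x : ℕ → EdgeType M | (x i).2.1 = (x (i+1)).1}
      = (fun x : ℕ → EdgeType M => (x i, x (i+1))) ⁻¹'
        {p : EdgeType M × EdgeType M | p.1.2.1 = p.2.1} := rfl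
  rw [he2]
  exact (isClosed_discrete _).preimage hcont

instance : CompactSpace (ShiftSpace M) := by
  have hc : IsCompact {x : ℕ → EdgeType M | ∀ i : ℕ, (x i).2.1 = (x (i+1)).1} :=
    (closed_shiftSpace (M := M)).isCompact
  exact isCompact_iff_compactSpace.mp hc

lemma isOpen_agree (x : ShiftSpace M) (N : ℕ) :
    IsOpen {y : ShiftSpace M | agree x y N} := by
  have he : {y : ShiftSpace M | agree x y N}
      = ⋂ s : Fin N, {y : ShiftSpace M | y.1 s.1 = x.1 s.1} := by
    ext y
    simp only [Set.mem_iInter, Set.mem_setOf_eq, agree]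
    constructor
    · intro hy s
      exact (hy s.1 s.2).symm
    · intro hy s hs
      exact (hy ⟨s, hs⟩).symm
  rw [he]
  refine isOpen_iInter_of_finite (fun s => ?_)
  have hcont : Continuous (fun y : ShiftSpace M => y.1 s.1) :=
    (continuous_apply s.1).comp continuous_subtype_val
  have he2 : {y : ShiftSpace M | y.1 s.1 = x.1 s.1}
      = (fun y : ShiftSpace M => y.1 s.1) ⁻¹' {x.1 s.1} := rfl
  rw [he2]
  exact (isOpen_discrete _).preimage hcont

lemma exists_window {β : Type*} [TopologicalSpace β] [DiscreteTopology β]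
    (g : ShiftSpace M → β) (hg : Continuous g) :
    ∃ N, ∀ x y, agree x y N → g x = g y := by
  have key : ∀ x : ShiftSpace M, ∃ N : ℕ, ∀ y, agree x y N → g y = g x := by
    intro x
    have hopen : IsOpen {y : ShiftSpace M | g y = g x} := by
      have : {y : ShiftSpace M | g y = g x} = g ⁻¹' {g x} := rfl
      rw [this]
      exact (isOpen_discrete _).preimage hg
    replace hopen := isOpen_induced_iff.mp hopen
    obtain ⟨U, hU, hUeq⟩ := hopen
    have hxU : x.1 ∈ U := by
      have : x ∈ Subtype.val ⁻¹' U := Eq.mpr (congrArg (x ∈ ·) hUeq) rfl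
      exact this
    obtain ⟨I, u, hIu, hpi⟩ := isOpen_pi_iff.mp hU x.1 hxU
    refine ⟨(I.sup id) + 1, fun y hy => ?_⟩
    have hy2 : y.1 ∈ (I : Set ℕ).pi u := by
      intro a ha
      have hval : y.1 a = x.1 a := by
        have : a < I.sup id + 1 := by
          have h' : id a ≤ I.sup id := Finset.le_sup ha
          simp only [id_eq] at h'
          omega
        exact (hy a this).symm
      rw [hval]
      exact (hIu a ha).2
    have : y ∈ Subtype.val ⁻¹' U := hpi hy2
    replace this := Eq.mp (congrArg (y ∈ ·) hUeq) this
    exact this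
  choose Nf hNf using key
  obtain ⟨t, ht⟩ := (isCompact_univ : IsCompact (Set.univ : Set (ShiftSpace M))).elim_finite_subcover
      (fun x => {y | agree x y (Nf x)}) (fun x => isOpen_agree x (Nf x))
      (by intro x _; exact Set.mem_iUnion.mpr ⟨x, fun s _ => rfl⟩)
  refine ⟨t.sup Nf, fun x y hxy => ?_⟩
  have hx : x ∈ ⋃ x₀ ∈ t, {y | agree x₀ y (Nf x₀)} := ht (Set.mem_univ x)
  obtain ⟨x₀, hx₀t, hx₀⟩ := Set.mem_iUnion₂.mp hx
  have h1 : g x = g x₀ := hNf x₀ x hx₀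
  have h2 : agree x₀ y (Nf x₀) :=
    fun s hs => (hx₀ s hs).trans (hxy s (lt_of_lt_of_le hs (Finset.le_sup hx₀t)))
  have h3 : g y = g x₀ := hNf x₀ y h2
  rw [h1, h3]


variable {k : ℕ} {M : Matrix (Fin k) (Fin k) ℕ}

lemma glue_zero (v : PathT M 0) (x : ShiftSpace M) (hc) : glue v x hc = x := by
  apply point_ext
  intro s
  have e : (glue v x hc).1 s = if h : s < 0 then v.1 ⟨s, h⟩ else x.1 (s - 0) := rfl
  rw [e, dif_neg (by omega), Nat.sub_zero]

lemma glue_coord {t : ℕ} (v : PathT M t) (x : ShiftSpace M) (hc) (s : ℕ) :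
    (glue v x hc).1 s = if h : s < t then v.1 ⟨s, h⟩ else x.1 (s - t) := rfl

lemma glue_cons {t : ℕ} (v : PathT M (t+1)) (x : ShiftSpace M) (hc)
    (hc₂ : ∀ h : 0 < t, rng ((dropFirst v).1 ⟨t-1, by omega⟩) = src (x.1 0))
    (hc₃ : rng (v.1 ⟨0, by omega⟩) = src ((glue (dropFirst v) x hc₂).1 0)) :
    glue v x hc = cons (v.1 ⟨0, by omega⟩) (glue (dropFirst v) x hc₂) hc₃ := by
  apply point_ext
  intro s
  match s with
  | 0 =>
      rw [cons_zero, glue_coord, dif_pos (by omega : (0:ℕ) < t+1)]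
  | (s+1) =>
      rw [cons_succ, glue_coord, glue_coord]
      by_cases h : s < t
      · rw [dif_pos (by omega : s+1 < t+1), dif_pos h]
        rfl
      · rw [dif_neg (by omega : ¬ (s+1 < t+1)), dif_neg h]
        have e : s + 1 - (t+1) = s - t := by omega
        rw [e]

/-- The compatibility condition for `glue (dropFirst v)`. -/
lemma dropFirst_glue_hc {t : ℕ} (v : PathT M (t+1)) (x : ShiftSpace M)
    (hc : ∀ h : 0 < t+1, rng (v.1 ⟨t+1-1, by omega⟩) = src (x.1 0)) :
    ∀ h : 0 < t, rng ((dropFirst v).1 ⟨t-1, by omega⟩) = src (x.1 0) := by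
  intro h
  rw [dropFirst_coord]
  have e : (⟨t-1+1, by omega⟩ : Fin (t+1)) = ⟨t+1-1, by omega⟩ := by
    apply Fin.ext; simp; omega
  rw [e]
  exact hc (by omega)

lemma glue_cons_hc3 {t : ℕ} (v : PathT M (t+1)) (x : ShiftSpace M)
    (hc : ∀ h : 0 < t+1, rng (v.1 ⟨t+1-1, by omega⟩) = src (x.1 0)) :
    rng (v.1 ⟨0, by omega⟩) = src ((glue (dropFirst v) x (dropFirst_glue_hc v x hc)).1 0) := by
  rcases Nat.eq_zero_or_pos t with ht | ht
  · subst ht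
    rw [glue_zero]
    exact hc (by omega)
  · rw [glue_coord, dif_pos ht, dropFirst_coord]
    exact v.2 0 (by omega)


/-- All the data extracted from a one-sided conjugacy: an equivariant bijection together
with a window size `N+1` for both it and its inverse. -/
structure Setup (n m : ℕ) (A : Matrix (Fin n) (Fin n) ℕ) (B : Matrix (Fin m) (Fin m) ℕ) :
    Type where
  e : ShiftSpace A ≃ ShiftSpace B
  hA : NoZeroRows A
  hB : NoZeroRows B
  N : ℕ
  comm : ∀ x, e (shiftMap A x) = shiftMap B (e x)
  win : ∀ x y, agree x y (N+1) → (e x).1 0 = (e y).1 0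
  win' : ∀ z w, agree z w (N+1) → (e.symm z).1 0 = (e.symm w).1 0

variable {n m : ℕ} {A : Matrix (Fin n) (Fin n) ℕ} {B : Matrix (Fin m) (Fin m) ℕ}

lemma Setup.comm' (S : Setup n m A B) (z : ShiftSpace B) :
    S.e.symm (shiftMap B z) = shiftMap A (S.e.symm z) := by
  apply S.e.injective
  rw [S.comm (S.e.symm z), Equiv.apply_symm_apply, Equiv.apply_symm_apply]

def Setup.symm (S : Setup n m A B) : Setup m n B A where
  e := S.e.symm
  hA := S.hB
  hB := S.hA
  N := S.N
  comm := S.comm'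
  win := S.win'
  win' := by
    intro z w h
    simp only [Equiv.symm_symm]
    exact S.win z w h

lemma Setup.symm_symm (S : Setup n m A B) : S.symm.symm = S := rfl

lemma Setup.comm_iter (S : Setup n m A B) (r : ℕ) (x : ShiftSpace A) :
    S.e ((shiftMap A)^[r] x) = (shiftMap B)^[r] (S.e x) := by
  induction r generalizing x with
  | zero => rfl
  | succ r ih =>
      rw [Function.iterate_succ_apply, Function.iterate_succ_apply, ih, S.comm]

lemma Setup.win_iter (S : Setup n m A B) (r : ℕ) {x y : ShiftSpace A}
    (h : agree x y (r + (S.N+1))) : ∀ s ≤ r, (S.e x).1 s = (S.e y).1 s := by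
  intro s hs
  have h1 : ∀ z : ShiftSpace A, (S.e z).1 s = (S.e ((shiftMap A)^[s] z)).1 0 := by
    intro z
    rw [S.comm_iter, shift_iter_coord, Nat.add_zero]
  rw [h1 x, h1 y]
  apply S.win
  intro q hq
  rw [shift_iter_coord, shift_iter_coord]
  exact h (s + q) (by omega)

/-- The vertex of `A` at which the `e.symm`-image of a `B`-path of full window length starts. -/
noncomputable def Setup.aV (S : Setup n m A B) (v : PathT B (S.N+1)) : Fin n :=
  src ((S.e.symm (extendP S.hB v)).1 0)

lemma Setup.aV_eq (S : Setup n m A B) (v : PathT B (S.N+1)) (z : ShiftSpace B)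
    (hz : ∀ (s : ℕ) (hs : s < S.N+1), z.1 s = v.1 ⟨s, hs⟩) :
    src ((S.e.symm z).1 0) = S.aV v := by
  apply congrArg src
  apply S.win'
  intro s hs
  rw [hz s hs, extendP_coord S.hB v hs]

/-- The matrix of the shift equivalence. -/
noncomputable def Setup.R (S : Setup n m A B) : Matrix (Fin n) (Fin m) ℕ :=
  fun i j => Nat.card {v : PathT B (S.N+1) // S.aV v = i ∧ endV v = j}

noncomputable def Setup.stepE (S : Setup n m A B) (ed : EdgeType A) (z : ShiftSpace B)
    (hc : rng ed = src ((S.e.symm z).1 0)) : EdgeType B :=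
  (S.e (cons ed (S.e.symm z) hc)).1 0

lemma Setup.step_shift (S : Setup n m A B) (ed : EdgeType A) (z : ShiftSpace B) (hc) :
    shiftMap B (S.e (cons ed (S.e.symm z) hc)) = z := by
  rw [← S.comm, shift_cons, Equiv.apply_symm_apply]

lemma Setup.step_rng (S : Setup n m A B) (ed : EdgeType A) (z : ShiftSpace B) (hc) :
    rng (S.stepE ed z hc) = src (z.1 0) := by
  have hadj := (S.e (cons ed (S.e.symm z) hc)).2 0
  have h1 : (S.e (cons ed (S.e.symm z) hc)).1 (0+1) = z.1 0 := by
    conv_rhs => rw [← S.step_shift ed z hc]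
    rfl
  show ((S.e (cons ed (S.e.symm z) hc)).1 0).2.1 = (z.1 0).1
  rw [hadj]
  exact congrArg (fun q => q.1) h1

lemma Setup.step_eq_cons (S : Setup n m A B) (ed : EdgeType A) (z : ShiftSpace B) (hc) :
    S.e (cons ed (S.e.symm z) hc) = cons (S.stepE ed z hc) z (S.step_rng ed z hc) :=
  eq_cons rfl (S.step_shift ed z hc)

lemma Setup.stepE_congr (S : Setup n m A B) (ed : EdgeType A) {z₁ z₂ : ShiftSpace B}
    (hag : agree z₁ z₂ (S.N+1))
    (hc₁ : rng ed = src ((S.e.symm z₁).1 0)) (hc₂ : rng ed = src ((S.e.symm z₂).1 0)) :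
    S.stepE ed z₁ hc₁ = S.stepE ed z₂ hc₂ := by
  have hr2 : rng (S.stepE ed z₁ hc₁) = src (z₂.1 0) := by
    rw [S.step_rng ed z₁ hc₁, hag 0 (by omega)]
  have key0 : (S.e.symm (cons (S.stepE ed z₁ hc₁) z₂ hr2)).1 0 = ed := by
    have hagc : agree (cons (S.stepE ed z₁ hc₁) z₂ hr2)
        (cons (S.stepE ed z₁ hc₁) z₁ (S.step_rng ed z₁ hc₁)) (S.N+1) := by
      intro s hs
      match s with
      | 0 => rfl
      | (s+1) => exact (hag s (by omega)).symm
    rw [S.win' _ _ hagc, ← S.step_eq_cons ed z₁ hc₁, Equiv.symm_apply_apply]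
    rfl
  have hshift : shiftMap A (S.e.symm (cons (S.stepE ed z₁ hc₁) z₂ hr2)) = S.e.symm z₂ := by
    rw [← S.comm', shift_cons]
  have hfull : S.e.symm (cons (S.stepE ed z₁ hc₁) z₂ hr2) = cons ed (S.e.symm z₂) hc₂ :=
    eq_cons key0 hshift
  have happ : cons (S.stepE ed z₁ hc₁) z₂ hr2 = S.e (cons ed (S.e.symm z₂) hc₂) := by
    rw [← hfull, Equiv.apply_symm_apply]
  show S.stepE ed z₁ hc₁ = (S.e (cons ed (S.e.symm z₂) hc₂)).1 0
  rw [← happ]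
  rfl


variable {n m : ℕ} {A : Matrix (Fin n) (Fin n) ℕ} {B : Matrix (Fin m) (Fin m) ℕ}

/-! ### The heart of `A * R = R * B` -/

/-- Forward map: split a `(N+2)`-path `w` of `B` into an `A`-edge and `dropFirst w`. -/
noncomputable def Setup.fwd1 (S : Setup n m A B) (w : PathT B (S.N+1+1)) :
    EdgeType A × PathT B (S.N+1) :=
  ((S.e.symm (extendP S.hB w)).1 0, dropFirst w)

lemma Setup.fwd1_src (S : Setup n m A B) (w : PathT B (S.N+1+1)) :
    src (S.fwd1 w).1 = S.aV (dropLast w) := by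
  apply S.aV_eq
  intro s hs
  rw [extendP_coord S.hB w (by omega), dropLast_coord]

lemma Setup.fwd1_rng (S : Setup n m A B) (w : PathT B (S.N+1+1)) :
    S.aV (dropFirst w) = rng (S.fwd1 w).1 := by
  have h1 : rng ((S.e.symm (extendP S.hB w)).1 0)
      = src ((S.e.symm (extendP S.hB w)).1 (0+1)) := (S.e.symm (extendP S.hB w)).2 0
  have h2 : (S.e.symm (shiftMap B (extendP S.hB w))).1 0
      = (S.e.symm (extendP S.hB w)).1 (0+1) := by
    rw [S.comm']
    rfl
  have h3 : src ((S.e.symm (shiftMap B (extendP S.hB w))).1 0) = S.aV (dropFirst w) := by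
    apply S.aV_eq
    intro s hs
    rw [shift_coord, extendP_coord S.hB w (by omega), dropFirst_coord]
  show S.aV (dropFirst w) = rng ((S.e.symm (extendP S.hB w)).1 0)
  rw [h1, ← h2, h3]

/-- Backward map: prepend an `A`-edge to a `B`-path via the conjugacy. -/
noncomputable def Setup.bwd1 (S : Setup n m A B)
    (p : EdgeType A × PathT B (S.N+1)) (hc : rng p.1 = S.aV p.2) : PathT B (S.N+1+1) :=
  consPath (S.stepE p.1 (extendP S.hB p.2) hc) p.2
    (fun h => by
      exact (S.step_rng _ _ _).trans (congrArg src (extendP_coord S.hB p.2 (by omega : 0 < S.N+1))))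

lemma Setup.bwd1_aV (S : Setup n m A B) (p : EdgeType A × PathT B (S.N+1))
    (hc : rng p.1 = S.aV p.2) : S.aV (dropLast (S.bwd1 p hc)) = src p.1 := by
  have h4 := S.aV_eq (dropLast (S.bwd1 p hc))
      (cons (S.stepE p.1 (extendP S.hB p.2) hc) (extendP S.hB p.2)
        (S.step_rng p.1 (extendP S.hB p.2) hc)) ?_
  · have h5 : S.e.symm (cons (S.stepE p.1 (extendP S.hB p.2) hc) (extendP S.hB p.2)
        (S.step_rng p.1 (extendP S.hB p.2) hc))
        = cons p.1 (S.e.symm (extendP S.hB p.2)) hc := by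
      rw [← S.step_eq_cons p.1 (extendP S.hB p.2) hc, Equiv.symm_apply_apply]
    rw [h5] at h4
    exact h4.symm
  · intro s hs
    match s with
    | 0 => rfl
    | (s+1) =>
        rw [cons_succ, extendP_coord S.hB p.2 (by omega : s < S.N+1)]
        rfl

lemma Setup.bwd1_endV (S : Setup n m A B) (p : EdgeType A × PathT B (S.N+1))
    (hc : rng p.1 = S.aV p.2) : endV (S.bwd1 p hc) = endV p.2 := rfl

/-- The prepended edge computed from the forward data recovers the original first edge. -/
lemma Setup.step_first (S : Setup n m A B) (w : PathT B (S.N+1+1))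
    (hc : rng ((S.e.symm (extendP S.hB w)).1 0)
      = src ((S.e.symm (extendP S.hB (dropFirst w))).1 0)) :
    S.stepE ((S.e.symm (extendP S.hB w)).1 0) (extendP S.hB (dropFirst w)) hc
      = w.1 ⟨0, by omega⟩ := by
  have hc₁ : rng ((S.e.symm (extendP S.hB w)).1 0)
      = src ((S.e.symm (shiftMap B (extendP S.hB w))).1 0) := by
    have ha : rng ((S.e.symm (extendP S.hB w)).1 0)
        = src ((S.e.symm (extendP S.hB w)).1 (0+1)) := (S.e.symm (extendP S.hB w)).2 0
    have hb : (S.e.symm (shiftMap B (extendP S.hB w))).1 0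
        = (S.e.symm (extendP S.hB w)).1 (0+1) := by
      rw [S.comm']
      rfl
    rw [hb]
    exact ha
  have hagree : agree (shiftMap B (extendP S.hB w)) (extendP S.hB (dropFirst w)) (S.N+1) := by
    intro s hs
    rw [shift_coord, extendP_coord S.hB w (by omega),
      extendP_coord S.hB (dropFirst w) hs, dropFirst_coord]
  have e1 := S.stepE_congr ((S.e.symm (extendP S.hB w)).1 0) hagree hc₁ hc
  have e2 : cons ((S.e.symm (extendP S.hB w)).1 0)
      (S.e.symm (shiftMap B (extendP S.hB w))) hc₁ = S.e.symm (extendP S.hB w) :=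
    (eq_cons rfl ((S.comm' (extendP S.hB w)).symm)).symm
  have e3 : S.stepE ((S.e.symm (extendP S.hB w)).1 0) (shiftMap B (extendP S.hB w)) hc₁
      = (S.e (S.e.symm (extendP S.hB w))).1 0 := by
    show (S.e (cons ((S.e.symm (extendP S.hB w)).1 0)
      (S.e.symm (shiftMap B (extendP S.hB w))) hc₁)).1 0 = _
    rw [e2]
  rw [← e1, e3, Equiv.apply_symm_apply]
  exact extendP_coord S.hB w (by omega)

lemma Setup.bwd1_fwd1 (S : Setup n m A B) (w : PathT B (S.N+1+1))
    (hc : rng (S.fwd1 w).1 = S.aV (S.fwd1 w).2) :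
    S.bwd1 (S.fwd1 w) hc = w := by
  apply PathT.ext
  rintro ⟨s, hs⟩
  match s with
  | (s+1) => rfl
  | 0 => exact S.step_first w hc

lemma Setup.fwd1_bwd1 (S : Setup n m A B) (p : EdgeType A × PathT B (S.N+1))
    (hc : rng p.1 = S.aV p.2) : S.fwd1 (S.bwd1 p hc) = p := by
  have hfst : (S.e.symm (extendP S.hB (S.bwd1 p hc))).1 0 = p.1 := by
    have hq : agree (extendP S.hB (S.bwd1 p hc))
        (cons (S.stepE p.1 (extendP S.hB p.2) hc) (extendP S.hB p.2)
          (S.step_rng p.1 (extendP S.hB p.2) hc)) (S.N+1) := by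
      intro s hs
      match s with
      | 0 => rw [extendP_coord _ _ (by omega : 0 < S.N+1+1)]; rfl
      | (s+1) =>
          rw [extendP_coord _ _ (by omega : s+1 < S.N+1+1), cons_succ,
            extendP_coord _ _ (by omega : s < S.N+1)]
          rfl
    rw [S.win' _ _ hq, ← S.step_eq_cons p.1 (extendP S.hB p.2) hc, Equiv.symm_apply_apply]
    rfl
  refine Prod.ext hfst ?_
  apply PathT.ext
  rintro ⟨s, hs⟩
  rfl

theorem Setup.E1 (S : Setup n m A B) : A * S.R = S.R * B := by
  ext i j
  rw [mul_apply, mul_apply]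
  have hL : ∀ c, A i c * S.R c j
      = Nat.card {ed : EdgeType A // src ed = i ∧ rng ed = c}
        * Nat.card {v : PathT B (S.N+1) // endV v = j ∧ S.aV v = c} := by
    intro c
    rw [← card_edge (M := A) i c]
    congr 1
    exact card_subtype_iff (fun v => and_comm)
  have hR : ∀ c, S.R i c * B c j
      = Nat.card {v : PathT B (S.N+1) // S.aV v = i ∧ endV v = c}
        * Nat.card {ed : EdgeType B // rng ed = j ∧ src ed = c} := by
    intro c
    congr 1
    rw [card_subtype_iff (fun ed => and_comm), card_edge]
  rw [Finset.sum_congr rfl fun c _ => hL c,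
    ← card_pairs rng S.aV (fun ed => src ed = i) (fun v => endV v = j),
    Finset.sum_congr rfl fun c _ => hR c,
    ← card_pairs endV src (fun v => S.aV v = i) (fun ed => rng ed = j)]
  have EL : {w : PathT B (S.N+1+1) // S.aV (dropLast w) = i ∧ endV w = j}
      ≃ {p : EdgeType A × PathT B (S.N+1) //
          src p.1 = i ∧ S.aV p.2 = rng p.1 ∧ endV p.2 = j} :=
    { toFun := fun w => ⟨S.fwd1 w.1, (S.fwd1_src w.1).trans w.2.1, S.fwd1_rng w.1, w.2.2⟩
      invFun := fun p => ⟨S.bwd1 p.1 p.2.2.1.symm,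
        (S.bwd1_aV p.1 _).trans p.2.1, (S.bwd1_endV p.1 _).trans p.2.2.2⟩
      left_inv := fun w => Subtype.ext (S.bwd1_fwd1 w.1 _)
      right_inv := fun p => Subtype.ext (S.fwd1_bwd1 p.1 _) }
  exact (Nat.card_congr EL).symm.trans (Nat.card_congr (snocSplit (fun v => S.aV v = i) j))


variable {k : ℕ} {M : Matrix (Fin k) (Fin k) ℕ}

lemma cons_congr_pt {ed : EdgeType M} {x y : ShiftSpace M} (h : x = y) {hcx hcy} :
    cons ed x hcx = cons ed y hcy := by
  subst h
  rfl

lemma glue_congr_pt {t : ℕ} (v : PathT M t) {x y : ShiftSpace M} (h : x = y) {hcx hcy} :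
    glue v x hcx = glue v y hcy := by
  subst h
  rfl


variable {n m : ℕ} {A : Matrix (Fin n) (Fin n) ℕ} {B : Matrix (Fin m) (Fin m) ℕ}

/-- Key independence lemma: gluing a `B`-word in front of conjugates of two points that
agree on a window makes the results agree on a correspondingly longer window. -/
lemma Setup.glue_congr (S : Setup n m A B) :
    ∀ (t : ℕ) (v : PathT B t) {y₁ y₂ : ShiftSpace A} (hag : agree y₁ y₂ (S.N+1))
      (hc₁ : ∀ h : 0 < t, rng (v.1 ⟨t-1, by omega⟩) = src ((S.e y₁).1 0))
      (hc₂ : ∀ h : 0 < t, rng (v.1 ⟨t-1, by omega⟩) = src ((S.e y₂).1 0)),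
      agree (S.e.symm (glue v (S.e y₁) hc₁)) (S.e.symm (glue v (S.e y₂) hc₂))
        (t + (S.N+1)) := by
  intro t
  induction t with
  | zero =>
      intro v y₁ y₂ hag hc₁ hc₂
      rw [glue_zero, glue_zero, Equiv.symm_apply_apply, Equiv.symm_apply_apply]
      exact hag.mono (by omega)
  | succ t ih =>
      intro v y₁ y₂ hag hc₁ hc₂
      rw [glue_cons v (S.e y₁) hc₁ (dropFirst_glue_hc v _ hc₁) (glue_cons_hc3 v _ hc₁),
        glue_cons v (S.e y₂) hc₂ (dropFirst_glue_hc v _ hc₂) (glue_cons_hc3 v _ hc₂)]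
      have hIH := ih (dropFirst v) hag (dropFirst_glue_hc v _ hc₁) (dropFirst_glue_hc v _ hc₂)
      set ξ₁ := S.e.symm (glue (dropFirst v) (S.e y₁) (dropFirst_glue_hc v _ hc₁)) with hξ₁
      set ξ₂ := S.e.symm (glue (dropFirst v) (S.e y₂) (dropFirst_glue_hc v _ hc₂)) with hξ₂
      have hPe₁ : glue (dropFirst v) (S.e y₁) (dropFirst_glue_hc v _ hc₁) = S.e ξ₁ :=
        (Equiv.apply_symm_apply S.e _).symm
      have hPe₂ : glue (dropFirst v) (S.e y₂) (dropFirst_glue_hc v _ hc₂) = S.e ξ₂ :=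
        (Equiv.apply_symm_apply S.e _).symm
      have hcs₁ : rng (v.1 ⟨0, by omega⟩) = src ((S.symm.e.symm ξ₁).1 0) := by
        show rng (v.1 ⟨0, by omega⟩) = src ((S.e ξ₁).1 0)
        rw [← hPe₁]
        exact glue_cons_hc3 v (S.e y₁) hc₁
      have hcs₂ : rng (v.1 ⟨0, by omega⟩) = src ((S.symm.e.symm ξ₂).1 0) := by
        show rng (v.1 ⟨0, by omega⟩) = src ((S.e ξ₂).1 0)
        rw [← hPe₂]
        exact glue_cons_hc3 v (S.e y₂) hc₂
      have hsteps : S.symm.stepE (v.1 ⟨0, by omega⟩) ξ₁ hcs₁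
          = S.symm.stepE (v.1 ⟨0, by omega⟩) ξ₂ hcs₂ :=
        S.symm.stepE_congr _ (hIH.mono (by have hNs : S.symm.N = S.N := rfl; omega)) hcs₁ hcs₂
      have hkey₁ : S.e.symm (cons (v.1 ⟨0, by omega⟩)
            (glue (dropFirst v) (S.e y₁) (dropFirst_glue_hc v _ hc₁))
            (glue_cons_hc3 v _ hc₁))
          = cons (S.symm.stepE (v.1 ⟨0, by omega⟩) ξ₁ hcs₁) ξ₁
              (S.symm.step_rng (v.1 ⟨0, by omega⟩) ξ₁ hcs₁) := by
        rw [cons_congr_pt hPe₁ (hcy := hcs₁)]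
        exact S.symm.step_eq_cons (v.1 ⟨0, by omega⟩) ξ₁ hcs₁
      have hkey₂ : S.e.symm (cons (v.1 ⟨0, by omega⟩)
            (glue (dropFirst v) (S.e y₂) (dropFirst_glue_hc v _ hc₂))
            (glue_cons_hc3 v _ hc₂))
          = cons (S.symm.stepE (v.1 ⟨0, by omega⟩) ξ₂ hcs₂) ξ₂
              (S.symm.step_rng (v.1 ⟨0, by omega⟩) ξ₂ hcs₂) := by
        rw [cons_congr_pt hPe₂ (hcy := hcs₂)]
        exact S.symm.step_eq_cons (v.1 ⟨0, by omega⟩) ξ₂ hcs₂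
      intro s hs
      rw [hkey₁, hkey₂]
      match s with
      | 0 =>
          rw [cons_zero, cons_zero, hsteps]
      | (s+1) =>
          rw [cons_succ, cons_succ]
          exact hIH s (by omega)

/-! ### The heart of `A ^ (2N+2) = R * S` -/

noncomputable def Setup.fwd3 (S : Setup n m A B) (u : PathT A ((S.N+1)+(S.N+1))) :
    PathT B (S.N+1) × PathT A (S.N+1) :=
  (takeP (S.e (extendP S.hA u)) (S.N+1), dropN (S.N+1) u)

lemma Setup.fwd3_aV (S : Setup n m A B) (u : PathT A ((S.N+1)+(S.N+1))) :
    S.aV (S.fwd3 u).1 = startV u := by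
  show S.aV (takeP (S.e (extendP S.hA u)) (S.N+1)) = startV u
  have h := S.aV_eq (takeP (S.e (extendP S.hA u)) (S.N+1)) (S.e (extendP S.hA u))
    (fun s hs => rfl)
  rw [Equiv.symm_apply_apply] at h
  rw [← h]
  show src ((extendP S.hA u).1 0) = startV u
  rw [extendP_coord S.hA u (by omega)]
  rfl

lemma Setup.fwd3_bV (S : Setup n m A B) (u : PathT A ((S.N+1)+(S.N+1))) :
    S.symm.aV (S.fwd3 u).2 = endV (S.fwd3 u).1 := by
  show S.symm.aV (dropN (S.N+1) u) = endV (takeP (S.e (extendP S.hA u)) (S.N+1))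
  have h := S.symm.aV_eq (dropN (S.N+1) u) ((shiftMap A)^[S.N+1] (extendP S.hA u)) ?_
  · rw [← h]
    show src ((S.e ((shiftMap A)^[S.N+1] (extendP S.hA u))).1 0) = _
    rw [S.comm_iter, shift_iter_coord]
    exact ((S.e (extendP S.hA u)).2 S.N).symm
  · intro s hs
    have hNs : S.symm.N = S.N := rfl
    rw [shift_iter_coord, extendP_coord S.hA u
      (lt_of_lt_of_le (show S.N+1+s < (S.N+1)+(S.N+1) by omega) (le_of_eq rfl))]
    rfl

lemma Setup.fwd3_endV (S : Setup n m A B) (u : PathT A ((S.N+1)+(S.N+1))) :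
    endV (S.fwd3 u).2 = endV u := rfl

lemma Setup.bwd3_hc (S : Setup n m A B) (p : PathT B (S.N+1) × PathT A (S.N+1))
    (hcb : S.symm.aV p.2 = endV p.1) :
    ∀ h : 0 < S.N+1,
      rng (p.1.1 ⟨S.N+1-1, by omega⟩) = src ((S.e (extendP S.hA p.2)).1 0) := by
  intro h
  show endV p.1 = src ((S.e (extendP S.hA p.2)).1 0)
  rw [← hcb]
  rfl

noncomputable def Setup.bwd3 (S : Setup n m A B) (p : PathT B (S.N+1) × PathT A (S.N+1))
    (hcb : S.symm.aV p.2 = endV p.1) : PathT A ((S.N+1)+(S.N+1)) :=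
  takeP (S.e.symm (glue p.1 (S.e (extendP S.hA p.2)) (S.bwd3_hc p hcb))) ((S.N+1)+(S.N+1))

lemma Setup.bwd3_startV (S : Setup n m A B) (p : PathT B (S.N+1) × PathT A (S.N+1))
    (hcb : S.symm.aV p.2 = endV p.1) : startV (S.bwd3 p hcb) = S.aV p.1 := by
  have h := S.aV_eq p.1 (glue p.1 (S.e (extendP S.hA p.2)) (S.bwd3_hc p hcb)) ?_
  · exact h ▸ rfl
  · intro s hs
    exact glue_lt p.1 _ _ hs

lemma Setup.bwd3_coord_ge (S : Setup n m A B) (p : PathT B (S.N+1) × PathT A (S.N+1))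
    (hcb : S.symm.aV p.2 = endV p.1) (s : ℕ) (hs : s < S.N+1) :
    (S.e.symm (glue p.1 (S.e (extendP S.hA p.2)) (S.bwd3_hc p hcb))).1 ((S.N+1)+s)
      = p.2.1 ⟨s, hs⟩ := by
  have h1 : (shiftMap A)^[S.N+1]
      (S.e.symm (glue p.1 (S.e (extendP S.hA p.2)) (S.bwd3_hc p hcb)))
      = extendP S.hA p.2 := by
    have h2 : S.e.symm ((shiftMap B)^[S.N+1] (glue p.1 (S.e (extendP S.hA p.2)) (S.bwd3_hc p hcb)))
        = (shiftMap A)^[S.N+1] (S.e.symm (glue p.1 (S.e (extendP S.hA p.2)) (S.bwd3_hc p hcb))) :=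
      S.symm.comm_iter (S.N+1) (glue p.1 (S.e (extendP S.hA p.2)) (S.bwd3_hc p hcb))
    rw [← h2, shift_iter_glue, Equiv.symm_apply_apply]
  rw [← shift_iter_coord (S.N+1) _ s, h1]
  exact extendP_coord S.hA p.2 hs

lemma Setup.bwd3_endV (S : Setup n m A B) (p : PathT B (S.N+1) × PathT A (S.N+1))
    (hcb : S.symm.aV p.2 = endV p.1) : endV (S.bwd3 p hcb) = endV p.2 := by
  show rng ((S.e.symm (glue p.1 (S.e (extendP S.hA p.2)) (S.bwd3_hc p hcb))).1 ((S.N+1)+S.N))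
      = endV p.2
  rw [S.bwd3_coord_ge p hcb S.N (by omega)]
  rfl

lemma Setup.bwd3_fwd3 (S : Setup n m A B) (u : PathT A ((S.N+1)+(S.N+1)))
    (hcb : S.symm.aV (S.fwd3 u).2 = endV (S.fwd3 u).1) :
    S.bwd3 (S.fwd3 u) hcb = u := by
  set x₀ := extendP S.hA u with hx₀
  have hcy₂ : ∀ h : 0 < S.N+1,
      rng ((takeP (S.e x₀) (S.N+1)).1 ⟨S.N+1-1, by omega⟩)
        = src ((S.e ((shiftMap A)^[S.N+1] x₀)).1 0) := by
    intro h
    rw [S.comm_iter, shift_iter_coord]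
    exact (S.e x₀).2 S.N
  have hglue : S.e.symm (glue (takeP (S.e x₀) (S.N+1)) (S.e ((shiftMap A)^[S.N+1] x₀)) hcy₂)
      = x₀ := by
    have h3 : glue (takeP (S.e x₀) (S.N+1)) (S.e ((shiftMap A)^[S.N+1] x₀)) hcy₂
        = S.e x₀ := by
      rw [glue_congr_pt (takeP (S.e x₀) (S.N+1)) (S.comm_iter (S.N+1) x₀)
        (hcy := fun h => by rw [shift_iter_coord]; exact (S.e x₀).2 S.N)]
      exact glue_takeP (S.e x₀) (S.N+1) _
    rw [h3, Equiv.symm_apply_apply]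
  have hagy : agree (extendP S.hA (dropN (S.N+1) u)) ((shiftMap A)^[S.N+1] x₀) (S.N+1) := by
    intro s hs
    rw [extendP_coord S.hA _ hs, shift_iter_coord,
      extendP_coord S.hA u (by omega : S.N+1+s < (S.N+1)+(S.N+1))]
    rfl
  have hmain := S.glue_congr (S.N+1) (takeP (S.e x₀) (S.N+1)) hagy
    (S.bwd3_hc (S.fwd3 u) hcb) hcy₂
  apply PathT.ext
  rintro ⟨s, hs⟩
  have h5 := hmain s (by omega)
  show (S.e.symm (glue (takeP (S.e x₀) (S.N+1)) (S.e (extendP S.hA (dropN (S.N+1) u)))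
      (S.bwd3_hc (S.fwd3 u) hcb))).1 s = u.1 ⟨s, hs⟩
  rw [h5, hglue]
  exact extendP_coord S.hA u hs

lemma Setup.fwd3_bwd3 (S : Setup n m A B) (p : PathT B (S.N+1) × PathT A (S.N+1))
    (hcb : S.symm.aV p.2 = endV p.1) : S.fwd3 (S.bwd3 p hcb) = p := by
  refine Prod.ext ?_ ?_
  · apply PathT.ext
    rintro ⟨s, hs⟩
    show (S.e (extendP S.hA (S.bwd3 p hcb))).1 s = p.1.1 ⟨s, hs⟩
    have hagr : agree (extendP S.hA (S.bwd3 p hcb))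
        (S.e.symm (glue p.1 (S.e (extendP S.hA p.2)) (S.bwd3_hc p hcb)))
        (S.N + (S.N+1)) := by
      intro q hq
      rw [extendP_coord S.hA _ (by omega : q < (S.N+1)+(S.N+1))]
      rfl
    have hwin := S.win_iter S.N hagr s (by omega : s ≤ S.N)
    rw [hwin, Equiv.apply_symm_apply]
    exact glue_lt p.1 _ _ hs
  · apply PathT.ext
    rintro ⟨s, hs⟩
    show (S.e.symm (glue p.1 (S.e (extendP S.hA p.2)) (S.bwd3_hc p hcb))).1 ((S.N+1)+s)
      = p.2.1 ⟨s, hs⟩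
    exact S.bwd3_coord_ge p hcb s hs

theorem Setup.E3 (S : Setup n m A B) : A ^ ((S.N+1)+(S.N+1)) = S.R * S.symm.R := by
  ext i i'
  rw [mul_apply]
  have hsummand : ∀ c, S.R i c * S.symm.R c i'
      = Nat.card {v : PathT B (S.N+1) // S.aV v = i ∧ endV v = c}
        * Nat.card {w : PathT A (S.N+1) // endV w = i' ∧ S.symm.aV w = c} := by
    intro c
    congr 1
    exact card_subtype_iff (fun w => and_comm)
  rw [Finset.sum_congr rfl fun c _ => hsummand c,
    ← card_pairs (γ := PathT B (S.N+1)) (δ := PathT A (S.N+1)) endV S.symm.aV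
      (fun v => S.aV v = i) (fun w => endV w = i')]
  have hexp : (S.N+1)+(S.N+1) = ((S.N+1)+S.N)+1 := rfl
  rw [hexp, pow_card ((S.N+1)+S.N) i i']
  have E : {u : PathT A (((S.N+1)+S.N)+1) // startV u = i ∧ endV u = i'}
      ≃ {p : PathT B (S.N+1) × PathT A (S.N+1) //
          S.aV p.1 = i ∧ S.symm.aV p.2 = endV p.1 ∧ endV p.2 = i'} :=
    { toFun := fun u => ⟨S.fwd3 u.1, (S.fwd3_aV u.1).trans u.2.1, S.fwd3_bV u.1,
        (S.fwd3_endV u.1).trans u.2.2⟩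
      invFun := fun p => ⟨S.bwd3 p.1 p.2.2.1, (S.bwd3_startV p.1 p.2.2.1).trans p.2.1,
        (S.bwd3_endV p.1 p.2.2.1).trans p.2.2.2⟩
      left_inv := fun u => Subtype.ext (S.bwd3_fwd3 u.1 (S.fwd3_bV u.1))
      right_inv := fun p => Subtype.ext (S.fwd3_bwd3 p.1 p.2.2.1) }
  exact Nat.card_congr E


lemma card_fiber_sum {k' : ℕ} {γ : Type*} [Finite γ] (F : γ → Fin k') (Q : γ → Prop) :
    Nat.card {x : γ // Q x} = ∑ c, Nat.card {x : γ // Q x ∧ F x = c} := by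
  have e : {x : γ // Q x} ≃ Σ c : Fin k', {x : γ // Q x ∧ F x = c} :=
    { toFun := fun x => ⟨F x.1, x.1, x.2, rfl⟩
      invFun := fun q => ⟨q.2.1, q.2.2.1⟩
      left_inv := fun x => rfl
      right_inv := fun q => by
        obtain ⟨c, x, hx, hF⟩ := q
        subst hF
        rfl }
  rw [Nat.card_congr e, ncard_sigma]

variable {n m : ℕ} {A : Matrix (Fin n) (Fin n) ℕ} {B : Matrix (Fin m) (Fin m) ℕ}

theorem Setup.E5 (S : Setup n m A B) (j : Fin m) :
    ∑ i, S.R i j = ∑ j', (B ^ (S.N+1)) j' j := by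
  have h1 : ∑ i, S.R i j = Nat.card {v : PathT B (S.N+1) // endV v = j} := by
    rw [card_fiber_sum S.aV (fun v => endV v = j)]
    apply Finset.sum_congr rfl
    intro c _
    exact card_subtype_iff (fun v => and_comm)
  have h2 : ∑ j', (B ^ (S.N+1)) j' j = Nat.card {v : PathT B (S.N+1) // endV v = j} := by
    rw [card_fiber_sum startV (fun v => endV v = j)]
    apply Finset.sum_congr rfl
    intro c _
    rw [pow_card S.N c j]
    exact card_subtype_iff (fun v => and_comm)
  rw [h1, h2]

end USE


/-- **Statement 12.** If the one-sided edge shifts of `A` and `B` (no zero rows) are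
one-sided conjugate, then `A` and `B` are unitally shift equivalent. -/
theorem oneSidedConjugacy_implies_unitallyShiftEquivalent
    {n m : ℕ} (A : Matrix (Fin n) (Fin n) ℕ) (B : Matrix (Fin m) (Fin m) ℕ)
    (hA : NoZeroRows A) (hB : NoZeroRows B)
    (h : ∃ h : ShiftSpace A ≃ₜ ShiftSpace B,
      ∀ x : ShiftSpace A, h (shiftMap A x) = shiftMap B (h x)) :
    UnitallyShiftEquivalent A B := by
  obtain ⟨h, hcomm⟩ := h
  have gc : Continuous (fun x : ShiftSpace A => (h x).1 0) :=
    ((continuous_apply 0).comp continuous_subtype_val).comp h.continuous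
  have gc' : Continuous (fun z : ShiftSpace B => (h.symm z).1 0) :=
    ((continuous_apply 0).comp continuous_subtype_val).comp h.symm.continuous
  obtain ⟨N₁, hN₁⟩ := USE.exists_window _ gc
  obtain ⟨N₂, hN₂⟩ := USE.exists_window _ gc'
  let S : USE.Setup n m A B :=
    { e := h.toEquiv
      hA := hA
      hB := hB
      N := max N₁ N₂
      comm := hcomm
      win := fun x y hag => hN₁ x y (hag.mono (by omega))
      win' := fun z w hag => hN₂ z w (hag.mono (by omega)) }
  refine ⟨(S.N+1)+(S.N+1), S.R, S.symm.R,
    ⟨⟨by omega, S.E3, S.symm.E3, S.E1, S.symm.E1⟩, 0, S.N+1, ?_⟩⟩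
  rw [pow_zero, one_mulVec, zero_add]
  funext j
  show ∑ i, S.Rᵀ j i * 1 = ∑ j', (Bᵀ ^ (S.N+1)) j j' * 1
  rw [← Matrix.transpose_pow]
  simp only [Matrix.transpose_apply, mul_one]
  exact S.E5 j
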